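/- Let A ⊆ ℝ^d be a bounded convex polytope with positive volume, m_1(A) = 0, M_1(A) = L > 0, and suppose centroid_1(A) > Ld/(d+1). Then there is a contradiction; equivalently, centroid_1(A) ≤ (d/(d+1))·M_1(A) whenever m_1(A) = 0. -/

import Mathlib

open MeasureTheory

theorem polytope_centroid_first_coordinate_upper_bound
    (d : ℕ) (hd : 0 < d) (s : Finset (Fin d → ℝ))
    (A : Set (Fin d → ℝ)) (hA : A = convexHull ℝ (s : Set (Fin d → ℝ)))
    (hvol : 0 < volume A)
    (hmin : sInf ((fun x => x ⟨0, hd⟩) '' A) = 0)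
    (L : ℝ) (hL : L = sSup ((fun x => x ⟨0, hd⟩) '' A)) (hLpos : 0 < L) :
    (∫ x in A, x ⟨0, hd⟩) / (volume A).toReal ≤ ((d : ℝ) / ((d : ℝ) + 1)) * L := by
  set i : Fin d := ⟨0, hd⟩ with hi
  have hAconv : Convex ℝ A := hA ▸ convex_convexHull ℝ _
  have hAcomp : IsCompact A := hA ▸ s.finite_toSet.isCompact_convexHull (𝕜 := ℝ)
  have hAmeas : MeasurableSet A := hAcomp.isClosed.measurableSet
  have hAne : A.Nonempty := by
    rcases A.eq_empty_or_nonempty with h | h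
    · rw [h] at hvol; simp at hvol
    · exact h
  have hVlt : volume A < ⊤ := hAcomp.measure_lt_top
  set V := (volume A).toReal with hV
  have hVpos : 0 < V := ENNReal.toReal_pos hvol.ne' hVlt.ne
  have hcont : Continuous (fun x : Fin d → ℝ => x i) := continuous_apply i
  have himgcomp : IsCompact ((fun x : Fin d → ℝ => x i) '' A) := hAcomp.image hcont
  have himgne : ((fun x : Fin d → ℝ => x i) '' A).Nonempty := hAne.image _
  obtain ⟨p, hpA, hp0⟩ : ∃ p ∈ A, p i = 0 := by
    have h0 := himgcomp.sInf_mem himgne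
    rw [hmin] at h0
    obtain ⟨p, hp, hp0⟩ := h0
    exact ⟨p, hp, hp0⟩
  have hub : ∀ x ∈ A, x i ≤ L := fun x hx =>
    hL ▸ le_csSup himgcomp.bddAbove ⟨x, hx, rfl⟩
  have hlb : ∀ x ∈ A, 0 ≤ x i := fun x hx =>
    hmin ▸ csInf_le himgcomp.bddBelow ⟨x, hx, rfl⟩
  have hfinrank : Module.finrank ℝ (Fin d → ℝ) = d := by
    rw [Module.finrank_fintype_fun_eq_card, Fintype.card_fin]
  -- key measure inequality
  have key : ∀ t ∈ Set.Ioc (0:ℝ) L,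
      ENNReal.ofReal ((t/L)^d) * volume A ≤ volume (A ∩ {x | x i ≤ t}) := by
    intro t ht
    set c := t / L with hc
    have hc0 : 0 ≤ c := div_nonneg ht.1.le hLpos.le
    have hc1 : c ≤ 1 := (div_le_one hLpos).mpr ht.2
    have himg : (AffineMap.homothety p c) '' A ⊆ A ∩ {x | x i ≤ t} := by
      rintro _ ⟨x, hx, rfl⟩
      rw [AffineMap.homothety_apply]
      constructor
      · have hmem := hAconv hpA hx (by linarith : (0:ℝ) ≤ 1 - c) hc0 (by ring)
        have : c • (x -ᵥ p) +ᵥ p = (1 - c) • p + c • x := by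
          simp only [vsub_eq_sub, vadd_eq_add, smul_sub, sub_smul, one_smul]
          abel
        rw [this]; exact hmem
      · show (c • (x -ᵥ p) +ᵥ p) i ≤ t
        have : (c • (x -ᵥ p) +ᵥ p) i = c * (x i - p i) + p i := rfl
        rw [this, hp0]
        have : c * (x i - 0) + 0 = c * x i := by ring
        rw [sub_zero, add_zero]
        calc c * x i ≤ c * L := by
              exact mul_le_mul_of_nonneg_left (hub x hx) hc0
          _ = t := div_mul_cancel₀ t hLpos.ne'
    calc ENNReal.ofReal ((t/L)^d) * volume A
        = volume ((AffineMap.homothety p c) '' A) := by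
          rw [Measure.addHaar_image_homothety, hfinrank, abs_pow, abs_of_nonneg hc0]
      _ ≤ volume (A ∩ {x | x i ≤ t}) := measure_mono himg
  -- layer cake
  have hintble : IntegrableOn (fun x : Fin d → ℝ => x i) A volume :=
    hcont.continuousOn.integrableOn_compact hAcomp
  have hnn : 0 ≤ᵐ[volume.restrict A] (fun x : Fin d → ℝ => x i) :=
    (ae_restrict_iff' hAmeas).mpr (Filter.Eventually.of_forall hlb)
  have hlayer := hintble.integral_eq_integral_meas_lt hnn
  set g : ℝ → ℝ := fun t => (volume ({a : Fin d → ℝ | t < a i} ∩ A)).toReal with hg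
  have hmeas_slice : ∀ t : ℝ, MeasurableSet {a : Fin d → ℝ | t < a i} := by
    intro t
    exact measurableSet_lt measurable_const (measurable_pi_apply i)
  have hrestrict : ∀ t : ℝ,
      (volume.restrict A) {a : Fin d → ℝ | t < a i} = volume ({a : Fin d → ℝ | t < a i} ∩ A) := by
    intro t
    rw [Measure.restrict_apply (hmeas_slice t)]
  have hlayer' : (∫ x in A, x i) = ∫ t in Set.Ioi (0:ℝ), g t := by
    rw [hlayer]
    congr 1
    ext t
    rw [hg, measureReal_def, hrestrict t]
  -- restrict to Ioc 0 L
  have hzero : ∀ t ∈ Set.Ioi (0:ℝ) \ Set.Ioc (0:ℝ) L, g t = 0 := by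
    intro t ht
    have hLt : L < t := by
      by_contra h
      exact ht.2 ⟨ht.1, not_lt.mp h⟩
    have : {a : Fin d → ℝ | t < a i} ∩ A = ∅ := by
      ext x
      simp only [Set.mem_inter_iff, Set.mem_setOf_eq, Set.mem_empty_iff_false, iff_false]
      rintro ⟨h1, h2⟩
      exact absurd (hub x h2) (not_le.mpr (hLt.trans h1))
    rw [hg]; simp only [this, measure_empty, ENNReal.toReal_zero]
  have hsplit : ∫ t in Set.Ioi (0:ℝ), g t = ∫ t in Set.Ioc (0:ℝ) L, g t :=
    setIntegral_eq_of_subset_of_forall_diff_eq_zero measurableSet_Ioi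
      Set.Ioc_subset_Ioi_self hzero
  -- pointwise bound on Ioc 0 L
  have hbound : ∀ t ∈ Set.Ioc (0:ℝ) L, g t ≤ V * (1 - (t/L)^d) := by
    intro t ht
    have hsum : volume ({a : Fin d → ℝ | t < a i} ∩ A) + volume (A ∩ {x | x i ≤ t})
        = volume A := by
      rw [← measure_union _ (hAmeas.inter (measurableSet_le (measurable_pi_apply i)
        measurable_const))]
      · congr 1
        ext x
        simp only [Set.mem_union, Set.mem_inter_iff, Set.mem_setOf_eq]
        constructor
        · rintro (⟨_, h⟩ | ⟨h, _⟩) <;> exact h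
        · intro hx
          rcases lt_or_ge t (x i) with h | h
          · exact Or.inl ⟨h, hx⟩
          · exact Or.inr ⟨hx, h⟩
      · rw [Set.disjoint_left]
        rintro x ⟨h1, _⟩ ⟨_, h2⟩
        have h2' : x i ≤ t := h2
        exact not_le.mpr h1 h2'
    have hl_le : volume (A ∩ {x | x i ≤ t}) ≤ volume A := measure_mono Set.inter_subset_left
    have hl_ne : volume (A ∩ {x | x i ≤ t}) ≠ ⊤ := (lt_of_le_of_lt hl_le hVlt).ne
    have hu_ne : volume ({a : Fin d → ℝ | t < a i} ∩ A) ≠ ⊤ :=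
      (lt_of_le_of_lt (measure_mono Set.inter_subset_right) hVlt).ne
    have hlow : (t/L)^d * V ≤ (volume (A ∩ {x | x i ≤ t})).toReal := by
      have h2 := ENNReal.toReal_mono hl_ne (key t ht)
      rwa [ENNReal.toReal_mul, ENNReal.toReal_ofReal (pow_nonneg (div_nonneg ht.1.le hLpos.le) d)] at h2
    have hsum' : g t + (volume (A ∩ {x | x i ≤ t})).toReal = V := by
      rw [hg, hV, ← hsum, ENNReal.toReal_add hu_ne hl_ne]
    have hring : V * (1 - (t/L)^d) = V - (t/L)^d * V := by ring
    linarith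
  -- antitone, hence measurable, hence integrable
  have hganti : Antitone g := by
    intro t1 t2 h
    apply ENNReal.toReal_mono
      ((lt_of_le_of_lt (measure_mono Set.inter_subset_right) hVlt).ne)
    exact measure_mono (Set.inter_subset_inter_left A fun x hx => lt_of_le_of_lt h hx)
  have hg_int : IntegrableOn g (Set.Ioc (0:ℝ) L) := by
    have hb : ∀ᵐ t ∂(volume.restrict (Set.Ioc (0:ℝ) L)), ‖g t‖ ≤ V := by
      apply ae_of_all
      intro t
      rw [Real.norm_eq_abs, abs_of_nonneg ENNReal.toReal_nonneg]
      exact ENNReal.toReal_mono hVlt.ne (measure_mono Set.inter_subset_right)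
    exact Integrable.mono' (integrable_const V) hganti.measurable.aestronglyMeasurable hb
  have hrhs_cont : Continuous (fun t : ℝ => V * (1 - (t/L)^d)) :=
    continuous_const.mul (continuous_const.sub ((continuous_id.div_const L).pow d))
  have hint_g : ∫ t in Set.Ioc (0:ℝ) L, g t ≤ ∫ t in Set.Ioc (0:ℝ) L, V * (1 - (t/L)^d) :=
    setIntegral_mono_on hg_int (hrhs_cont.integrableOn_Ioc) measurableSet_Ioc hbound
  have hcalc : ∫ t in Set.Ioc (0:ℝ) L, V * (1 - (t/L)^d) = V * (L * d / (d+1)) := by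
    rw [← intervalIntegral.integral_of_le hLpos.le]
    have heq : ∀ t:ℝ, V * (1 - (t/L)^d) = V - (V / L^d) * t^d := by
      intro t
      rw [div_pow]
      field_simp
    simp_rw [heq]
    rw [intervalIntegral.integral_sub intervalIntegrable_const
      ((intervalIntegral.intervalIntegrable_pow d).const_mul _),
      intervalIntegral.integral_const, intervalIntegral.integral_const_mul,
      integral_pow]
    have hd1 : (d:ℝ) + 1 ≠ 0 := by positivity
    field_simp
    ring
  rw [div_le_iff₀ hVpos]
  calc ∫ x in A, x i = ∫ t in Set.Ioc (0:ℝ) L, g t := by rw [hlayer', hsplit]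
    _ ≤ V * (L * d / (d+1)) := le_of_le_of_eq hint_g hcalc
    _ = (d:ℝ) / ((d:ℝ) + 1) * L * V := by ring
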